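/- Let d ≥ 1, k ≥ 1, and let i_1, …, i_M ∈ ℤ^d be a finite sequence with ‖i_{l+1} − i_l‖_∞ ≤ 1 for all 1 ≤ l < M and ‖i_M − i_1‖_∞ ≥ 5k. Then there exist indices 1 = τ(1) < τ(2) < ⋯ < τ(k) ≤ M such that ‖i_{τ(j+1)} − i_{τ(j)}‖_∞ = 5 for all 1 ≤ j < k, and ‖i_{τ(j)} − i_{τ(j')}‖_∞ ≥ 5 for all j ≠ j'. -/
import Mathlib

private def supN {d : ℕ} (x : Fin d → ℤ) : ℕ := Finset.univ.sup fun b => (x b).natAbs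

private lemma norm_eq_supN {d : ℕ} (x : Fin d → ℤ) : ‖x‖ = (supN x : ℝ) := by
  have h : ((Finset.univ.sup fun b => (x b).natAbs : ℕ) : NNReal)
      = Finset.univ.sup fun b => ‖x b‖₊ := by
    rw [Nat.cast_finsetSup]
    simp only [NNReal.natCast_natAbs]
  rw [Pi.norm_def, ← h, supN]
  norm_cast



/-- Let `d ≥ 1`, `k ≥ 1`, and let `i_1, …, i_M ∈ ℤ^d` be a finite
sequence with `‖i_{l+1} − i_l‖_∞ ≤ 1` for all `1 ≤ l < M` and
`‖i_M − i_1‖_∞ ≥ 5k`. Then there exist indices `1 = τ(1) < τ(2) < ⋯ < τ(k) ≤ M`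
such that `‖i_{τ(j+1)} − i_{τ(j)}‖_∞ = 5` for all `1 ≤ j < k`, and
`‖i_{τ(j)} − i_{τ(j')}‖_∞ ≥ 5` for all `j ≠ j'`.
(Here `‖·‖` on `Fin d → ℤ` is the sup norm.) -/
theorem statement12 (d : ℕ) (hd : 1 ≤ d) (k : ℕ) (hk : 1 ≤ k)
    (M : ℕ) (hM : 1 ≤ M) (i : ℕ → (Fin d → ℤ))
    (hstep : ∀ l, 1 ≤ l → l < M → ‖i (l + 1) - i l‖ ≤ 1)
    (hfar : (5 * k : ℝ) ≤ ‖i M - i 1‖) :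
    ∃ τ : ℕ → ℕ, τ 1 = 1 ∧
      (∀ j, 1 ≤ j → j < k → τ j < τ (j + 1)) ∧
      τ k ≤ M ∧
      (∀ j, 1 ≤ j → j < k → ‖i (τ (j + 1)) - i (τ j)‖ = 5) ∧
      (∀ j j', 1 ≤ j → j ≤ k → 1 ≤ j' → j' ≤ k → j ≠ j' →
        (5 : ℝ) ≤ ‖i (τ j) - i (τ j')‖) := by
  classical
  set N : ℕ → ℕ → ℕ := fun a b => supN (i a - i b) with hNdef
  have tri : ∀ a b c : ℕ, N a c ≤ N a b + N b c := by
    intro a b c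
    have h := norm_add_le (i a - i b) (i b - i c)
    rw [sub_add_sub_cancel] at h
    rw [norm_eq_supN, norm_eq_supN, norm_eq_supN] at h
    exact_mod_cast h
  have Nself : ∀ a : ℕ, N a a = 0 := by
    intro a
    have : ‖i a - i a‖ = ((N a a : ℕ) : ℝ) := norm_eq_supN _
    simp only [sub_self, norm_zero] at this
    exact_mod_cast this.symm
  have stepN : ∀ l, 1 ≤ l → l < M → N (l + 1) l ≤ 1 := by
    intro l h1 h2
    have h := hstep l h1 h2
    rw [norm_eq_supN] at h
    exact_mod_cast h
  have hfarN : 5 * k ≤ N M 1 := by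
    rw [norm_eq_supN] at hfar
    exact_mod_cast hfar
  -- the "next index" function
  set f : ℕ → ℕ := fun t => Nat.findGreatest (fun l => t ≤ l ∧ N l t ≤ 4) M + 1 with hfdef
  have key : ∀ t, 1 ≤ t → t ≤ M → 5 ≤ N M t →
      t < f t ∧ f t ≤ M ∧ N (f t) t = 5 ∧
      (∀ l, f t ≤ l → l ≤ M → 5 ≤ N l t) := by
    intro t h1t htM h5
    set P : ℕ → Prop := fun l => t ≤ l ∧ N l t ≤ 4 with hPdef
    set u : ℕ := Nat.findGreatest P M with hudef
    have hu1 : t ≤ u := Nat.le_findGreatest htM ⟨le_refl t, by simp [Nself]⟩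
    have huM : u ≤ M := Nat.findGreatest_le M
    have hspec : P u := Nat.findGreatest_of_ne_zero hudef.symm (by omega)
    have huM' : u < M := by
      rcases lt_or_eq_of_le huM with h | h
      · exact h
      · exfalso; have := hspec.2; rw [h] at this; omega
    have hgt : ∀ l, u < l → l ≤ M → 5 ≤ N l t := by
      intro l hl hlM
      by_contra hcon
      push_neg at hcon
      exact Nat.findGreatest_is_greatest (P := P) (hudef ▸ hl) hlM ⟨by omega, by omega⟩
    have hft : f t = u + 1 := rfl
    refine ⟨by omega, by omega, ?_, ?_⟩
    · have hup : N (u + 1) t ≤ 5 := by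
        have := tri (u + 1) u t
        have hs := stepN u (by omega) huM'
        have := hspec.2
        omega
      have hlow : 5 ≤ N (u + 1) t := hgt (u + 1) (by omega) (by omega)
      rw [hft]; omega
    · intro l hl hlM
      exact hgt l (by rw [hft] at hl; omega) hlM
  -- the sequence
  set τ : ℕ → ℕ := fun j => j.rec 1 (fun n ih => if n = 0 then 1 else f ih) with hτdef
  have hτ1 : τ 1 = 1 := rfl
  have hτsucc : ∀ j, 1 ≤ j → τ (j + 1) = f (τ j) := by
    intro j hj
    cases j with
    | zero => omega
    | succ n => simp [hτdef]
  -- main induction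
  have main : ∀ j, 1 ≤ j → j ≤ k →
      (1 ≤ τ j ∧ τ j ≤ M ∧ 5 * (k - j) ≤ N M (τ j)) ∧
      (∀ j', 1 ≤ j' → j' < j → τ j' < τ (j' + 1)) ∧
      (∀ j', 1 ≤ j' → j' < j → N (τ (j' + 1)) (τ j') = 5) ∧
      (∀ j', 1 ≤ j' → j' < j → ∀ l, τ (j' + 1) ≤ l → l ≤ M → 5 ≤ N l (τ j')) := by
    intro j hj
    induction j, hj using Nat.le_induction with
    | base =>
      intro _
      refine ⟨⟨by rw [hτ1], by rw [hτ1]; exact hM, ?_⟩, ?_, ?_, ?_⟩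
      · rw [hτ1]
        calc 5 * (k - 1) ≤ 5 * k := by omega
        _ ≤ N M 1 := hfarN
      all_goals intro j' h1 h2; omega
    | succ j hj ih =>
      intro hjk
      obtain ⟨⟨hA, hB, hC⟩, hD, hE, hF⟩ := ih (by omega)
      have h5 : 5 ≤ N M (τ j) := by
        have : 1 ≤ k - j := by omega
        omega
      obtain ⟨k1, k2, k3, k4⟩ := key (τ j) hA hB h5
      rw [← hτsucc j (by omega)] at k1 k2 k3 k4
      refine ⟨⟨by omega, k2, ?_⟩, ?_, ?_, ?_⟩
      · have := tri M (τ (j + 1)) (τ j)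
        have : 5 * (k - j) ≤ N M (τ (j + 1)) + 5 := by omega
        omega
      · intro j' h1 h2
        rcases lt_or_eq_of_le (by omega : j' ≤ j) with h | h
        · exact hD j' h1 h
        · rw [h]; exact k1
      · intro j' h1 h2
        rcases lt_or_eq_of_le (by omega : j' ≤ j) with h | h
        · exact hE j' h1 h
        · rw [h]; exact k3
      · intro j' h1 h2
        rcases lt_or_eq_of_le (by omega : j' ≤ j) with h | h
        · exact hF j' h1 h
        · rw [h]; exact k4
  obtain ⟨⟨hA, hB, _⟩, hD, hE, hF⟩ := main k hk (le_refl k)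
  -- monotonicity
  have mono : ∀ a b, 1 ≤ a → a ≤ b → b ≤ k → τ a ≤ τ b := by
    intro a b h1 hab hbk
    induction b with
    | zero => omega
    | succ n ihn =>
      rcases lt_or_eq_of_le hab with h | h
      · have hn : τ a ≤ τ n := ihn (by omega) (by omega)
        have : τ n < τ (n + 1) := hD n (by omega) (by omega)
        omega
      · rw [h]
  have hτM : ∀ j, 1 ≤ j → j ≤ k → τ j ≤ M := by
    intro j h1 h2
    exact le_trans (mono j k h1 h2 (le_refl k)) hB
  refine ⟨τ, hτ1, hD, hB, ?_, ?_⟩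
  · intro j h1 h2
    rw [norm_eq_supN]
    have h5 : supN (i (τ (j + 1)) - i (τ j)) = 5 := hE j h1 h2
    rw [h5]
    norm_num
  · intro j j' h1 h2 h1' h2' hne
    have main5 : ∀ a b, 1 ≤ a → a < b → b ≤ k → (5 : ℝ) ≤ ‖i (τ b) - i (τ a)‖ := by
      intro a b ha hab hbk
      have h' : 5 ≤ N (τ b) (τ a) := by
        apply hF a ha (by omega) (τ b)
        · exact mono (a + 1) b (by omega) (by omega) hbk
        · exact hτM b (by omega) hbk
      rw [norm_eq_supN]
      exact_mod_cast h'
    rcases lt_or_gt_of_ne hne with h | h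
    · rw [norm_sub_rev]
      exact main5 j j' h1 h h2'
    · exact main5 j' j h1' h h2
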